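/- arXiv:1802.01519 — 4 statements merged into one kernel-verified Lean document; each statement's English description precedes it below -/
import Mathlib

section
/- Let T(t) = exp(−Γ₂ t Δ²) denote the semigroup generated by −Γ₂Δ² on FM(ℝⁿ), i.e. (T(t)u₀)^∧ = e^{−Γ₂ t|ξ|⁴} û₀, with Γ₂ > 0. Then for 1 ≤ p ≤ ∞, ‖Δ²T(·)u₀‖_{L^p(ℝ₊, FM(ℝⁿ))} ≤ (Γ₂ p)^{−1/p} ‖u₀‖_{FM^{4−4/p}} for all u₀ ∈ FM^{4−4/p}(ℝⁿ). -/
open MeasureTheory ENNReal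

private lemma lint_exp {b : ℝ} (hb : 0 < b) :
    ∫⁻ t in Set.Ioi (0 : ℝ), ENNReal.ofReal (Real.exp (-(b * t))) = ENNReal.ofReal b⁻¹ := by
  rw [← ofReal_integral_eq_lintegral_ofReal]
  · congr 1
    have h := MeasureTheory.integral_comp_mul_left_Ioi (fun x => Real.exp (-x)) 0 hb
    simp only [mul_zero, integral_exp_neg_Ioi, neg_zero, Real.exp_zero, smul_eq_mul, mul_one] at h
    simpa using h
  · exact (exp_neg_integrableOn_Ioi 0 hb).congr_fun (fun x _ => by ring_nf) measurableSet_Ioi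
  · exact Filter.Eventually.of_forall fun t => (Real.exp_pos _).le

private lemma norm_rpow_integrable {n : ℕ} {μ : Measure (EuclideanSpace ℝ (Fin n))}
    [IsFiniteMeasure μ]
    (hμ : Integrable (fun ξ : EuclideanSpace ℝ (Fin n) => ‖ξ‖ ^ (4 : ℝ)) μ)
    {a : ℝ} (ha0 : 0 ≤ a) (ha4 : a ≤ 4) :
    Integrable (fun ξ : EuclideanSpace ℝ (Fin n) => ‖ξ‖ ^ a) μ := by
  refine (hμ.add (integrable_const 1)).mono ?_ (Filter.Eventually.of_forall fun ξ => ?_)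
  · exact ((continuous_norm.rpow_const fun x => Or.inr ha0)).aestronglyMeasurable
  · have h1 : (0:ℝ) ≤ ‖ξ‖ ^ (4:ℝ) := Real.rpow_nonneg (norm_nonneg _) _
    have h2 : (0:ℝ) ≤ ‖ξ‖ ^ a := Real.rpow_nonneg (norm_nonneg _) _
    simp only [Pi.add_apply]
    rw [Real.norm_eq_abs, abs_of_nonneg h2, Real.norm_eq_abs, abs_of_nonneg (by positivity)]
    rcases le_or_gt ‖ξ‖ 1 with h | h
    · have := Real.rpow_le_one (norm_nonneg _) h ha0
      linarith
    · have := Real.rpow_le_rpow_of_exponent_le h.le ha4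
      linarith

private lemma main_lint {n : ℕ} {Γ₂ : ℝ} (hΓ₂ : 0 < Γ₂) {r : ℝ} (hr : 1 ≤ r)
    (μ : Measure (EuclideanSpace ℝ (Fin n))) [IsFiniteMeasure μ]
    (hμ : Integrable (fun ξ : EuclideanSpace ℝ (Fin n) => ‖ξ‖ ^ (4 : ℝ)) μ) :
    ∫⁻ t in Set.Ioi (0 : ℝ),
        (ENNReal.ofReal (∫ ξ, ‖ξ‖ ^ (4 : ℝ) * Real.exp (-Γ₂ * t * ‖ξ‖ ^ (4 : ℝ)) ∂μ)) ^ r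
      ≤ ENNReal.ofReal (Γ₂ * r)⁻¹ *
          (∫⁻ ξ, ENNReal.ofReal (‖ξ‖ ^ ((4 : ℝ) - 4 / r)) ∂μ) ^ r := by
  have hr0 : (0:ℝ) < r := lt_of_lt_of_le one_pos hr
  set E := EuclideanSpace ℝ (Fin n)
  set w : E → ℝ := fun ξ => ‖ξ‖ ^ ((4 : ℝ) - 4 / r) with hw_def
  set Ce : ℝ≥0∞ := ∫⁻ ξ, ENNReal.ofReal (w ξ) ∂μ with hCe_def
  have hw_int : Integrable w μ :=
    norm_rpow_integrable hμ
      (by have h : 4 / r ≤ 4 := by rw [div_le_iff₀ hr0]; nlinarith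
          linarith)
      (by have h : (0:ℝ) ≤ 4 / r := by positivity
          linarith)
  have hCe_eq : ENNReal.ofReal (∫ ξ, w ξ ∂μ) = Ce :=
    ofReal_integral_eq_lintegral_ofReal hw_int
      (Filter.Eventually.of_forall fun ξ => Real.rpow_nonneg (norm_nonneg _) _)
  have hCe_top : Ce ≠ ∞ := by rw [← hCe_eq]; exact ofReal_ne_top
  -- Φ is the post-Hölder integrand
  set Φ : E → ℝ → ℝ≥0∞ := fun ξ t =>
    ENNReal.ofReal (‖ξ‖ ^ (4:ℝ) * w ξ * Real.exp (-(Γ₂ * r) * t * ‖ξ‖ ^ (4:ℝ))) with hΦ_def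
  -- Step A : Hölder/Jensen in ξ for each fixed t > 0
  have stepA : ∀ t ∈ Set.Ioi (0:ℝ),
      (ENNReal.ofReal (∫ ξ, ‖ξ‖ ^ (4:ℝ) * Real.exp (-Γ₂ * t * ‖ξ‖ ^ (4:ℝ)) ∂μ)) ^ r
        ≤ (∫⁻ ξ, Φ ξ t ∂μ) * Ce ^ (r - 1) := by
    intro t ht
    have hexp_le : ∀ ξ : E, Real.exp (-Γ₂ * t * ‖ξ‖ ^ (4:ℝ)) ≤ 1 := by
      intro ξ
      rw [Real.exp_le_one_iff]
      have : -Γ₂ * t * ‖ξ‖ ^ (4:ℝ) = -(Γ₂ * t * ‖ξ‖ ^ (4:ℝ)) := by ring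
      rw [this, neg_nonpos]
      have ht0 : (0:ℝ) < t := Set.mem_Ioi.mp ht
      exact mul_nonneg (mul_nonneg hΓ₂.le ht0.le) (Real.rpow_nonneg (norm_nonneg _) _)
    have hint_t : Integrable (fun ξ : E => ‖ξ‖ ^ (4:ℝ) * Real.exp (-Γ₂ * t * ‖ξ‖ ^ (4:ℝ))) μ := by
      refine hμ.mono ?_ (Filter.Eventually.of_forall fun ξ => ?_)
      · refine Continuous.aestronglyMeasurable ?_
        exact (continuous_norm.rpow_const fun _ => Or.inr (by norm_num)).mul
          (Real.continuous_exp.comp (((continuous_const.mul continuous_const).mul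
            (continuous_norm.rpow_const fun _ => Or.inr (by norm_num)))))
      · have h1 : (0:ℝ) ≤ ‖ξ‖ ^ (4:ℝ) := Real.rpow_nonneg (norm_nonneg _) _
        rw [Real.norm_eq_abs, Real.norm_eq_abs, abs_of_nonneg h1,
          abs_of_nonneg (mul_nonneg h1 (Real.exp_pos _).le)]
        exact mul_le_of_le_one_right h1 (hexp_le ξ)
    have hF : ENNReal.ofReal (∫ ξ, ‖ξ‖ ^ (4:ℝ) * Real.exp (-Γ₂ * t * ‖ξ‖ ^ (4:ℝ)) ∂μ)
        = ∫⁻ ξ, ENNReal.ofReal (‖ξ‖ ^ (4:ℝ) * Real.exp (-Γ₂ * t * ‖ξ‖ ^ (4:ℝ))) ∂μ :=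
      ofReal_integral_eq_lintegral_ofReal hint_t
        (Filter.Eventually.of_forall fun ξ =>
          mul_nonneg (Real.rpow_nonneg (norm_nonneg _) _) (Real.exp_pos _).le)
    rw [hF]
    rcases eq_or_lt_of_le hr with hr1 | hr1
    · -- r = 1 : trivial case
      rw [← hr1]
      simp only [ENNReal.rpow_one, sub_self, ENNReal.rpow_zero, mul_one]
      refine le_of_eq (lintegral_congr fun ξ => ?_)
      simp only [hΦ_def, hw_def, ← hr1]
      norm_num [Real.rpow_zero]
      rw [ENNReal.ofReal_mul (by positivity), ENNReal.ofReal_pow (norm_nonneg _), ofReal_norm]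
    · -- r > 1 : Hölder with conjugate exponent q
      set q : ℝ := r.conjExponent with hq_def
      have hconj : r.HolderConjugate q := Real.HolderConjugate.conjExponent hr1
      have hq_eq : q = r / (r - 1) := rfl
      have hq0 : 0 < q := hconj.symm.pos
      have hrm1 : (0:ℝ) < r - 1 := by linarith
      set α : ℝ := (8 - 4 / r) / r with hα_def
      set β : ℝ := ((4:ℝ) - 4 / r) / q with hβ_def
      have hα_pos : 0 < α := by
        apply div_pos _ hr0
        have : 4 / r ≤ 4 := by
          rw [div_le_iff₀ hr0]; nlinarith
        linarith
      have hβ_pos : 0 < β := by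
        apply div_pos _ hq0
        have : 4 / r < 4 := by
          rw [div_lt_iff₀ hr0]; nlinarith
        linarith
      set f : E → ℝ≥0∞ := fun ξ =>
        ENNReal.ofReal (‖ξ‖ ^ α * Real.exp (-Γ₂ * t * ‖ξ‖ ^ (4:ℝ))) with hf_def
      set g : E → ℝ≥0∞ := fun ξ => ENNReal.ofReal (‖ξ‖ ^ β) with hg_def
      have h4c : Continuous fun ξ : E => ‖ξ‖ ^ (4:ℝ) :=
        continuous_norm.rpow_const fun _ => Or.inr (by norm_num)
      have hec : Continuous fun ξ : E => Real.exp (-Γ₂ * t * ‖ξ‖ ^ (4:ℝ)) :=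
        Real.continuous_exp.comp (continuous_const.mul h4c)
      have hf_meas : AEMeasurable f μ :=
        (((continuous_norm.rpow_const fun _ => Or.inr hα_pos.le).mul
          hec).measurable.ennreal_ofReal).aemeasurable
      have hg_meas : AEMeasurable g μ :=
        ((continuous_norm.rpow_const fun _ =>
          Or.inr hβ_pos.le).measurable.ennreal_ofReal).aemeasurable
      have hfg : ∀ ξ : E, f ξ * g ξ
          = ENNReal.ofReal (‖ξ‖ ^ (4:ℝ) * Real.exp (-Γ₂ * t * ‖ξ‖ ^ (4:ℝ))) := by
        intro ξ
        rw [hf_def, hg_def, ← ENNReal.ofReal_mul (by positivity)]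
        congr 1
        rcases eq_or_lt_of_le (norm_nonneg ξ) with hξ | hξ
        · rw [← hξ, Real.zero_rpow hα_pos.ne', Real.zero_rpow hβ_pos.ne',
            Real.zero_rpow (by norm_num : (4:ℝ) ≠ 0)]
          ring
        · have hαβ : α + β = 4 := by
            rw [hα_def, hβ_def, hq_eq]
            field_simp
            ring
          rw [mul_right_comm, ← Real.rpow_add hξ, hαβ]
      have hfr : ∀ ξ : E, f ξ ^ r = Φ ξ t := by
        intro ξ
        rw [hf_def, hΦ_def, ENNReal.ofReal_rpow_of_nonneg (by positivity) hr0.le]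
        congr 1
        rw [Real.mul_rpow (Real.rpow_nonneg (norm_nonneg _) _) (Real.exp_pos _).le,
          ← Real.rpow_mul (norm_nonneg ξ), ← Real.exp_mul]
        have harg : -Γ₂ * t * ‖ξ‖ ^ (4:ℝ) * r = -(Γ₂ * r) * t * ‖ξ‖ ^ (4:ℝ) := by ring
        have hαr : α * r = 8 - 4 / r := div_mul_cancel₀ _ hr0.ne'
        rw [harg, hαr, hw_def]
        rcases eq_or_lt_of_le (norm_nonneg ξ) with hξ | hξ
        · rw [← hξ, Real.zero_rpow (by norm_num : (4:ℝ) ≠ 0),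
            Real.zero_rpow (by intro h; nlinarith [div_pos (by norm_num : (0:ℝ) < 4) hr0] : (8:ℝ) - 4 / r ≠ 0)]
          ring
        · rw [show (8:ℝ) - 4 / r = 4 + (4 - 4 / r) by ring, Real.rpow_add hξ]
      have hgq : ∀ ξ : E, g ξ ^ q = ENNReal.ofReal (w ξ) := by
        intro ξ
        rw [hg_def, hw_def, ENNReal.ofReal_rpow_of_nonneg (Real.rpow_nonneg (norm_nonneg _) _) hq0.le,
          ← Real.rpow_mul (norm_nonneg ξ), hβ_def, div_mul_cancel₀ _ hq0.ne']
      have hH := ENNReal.lintegral_mul_le_Lp_mul_Lq μ hconj hf_meas hg_meas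
      have e1 : ∫⁻ ξ, (f * g) ξ ∂μ
          = ∫⁻ ξ, ENNReal.ofReal (‖ξ‖ ^ (4:ℝ) * Real.exp (-Γ₂ * t * ‖ξ‖ ^ (4:ℝ))) ∂μ :=
        lintegral_congr fun ξ => hfg ξ
      have e2 : ∫⁻ ξ, f ξ ^ r ∂μ = ∫⁻ ξ, Φ ξ t ∂μ := lintegral_congr fun ξ => hfr ξ
      have e3 : ∫⁻ ξ, g ξ ^ q ∂μ = Ce := by
        rw [hCe_def]; exact lintegral_congr fun ξ => hgq ξ
      rw [e1, e2, e3] at hH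
      calc (∫⁻ ξ, ENNReal.ofReal (‖ξ‖ ^ (4:ℝ) * Real.exp (-Γ₂ * t * ‖ξ‖ ^ (4:ℝ))) ∂μ) ^ r
          ≤ ((∫⁻ ξ, Φ ξ t ∂μ) ^ (1/r) * Ce ^ (1/q)) ^ r := ENNReal.rpow_le_rpow hH hr0.le
        _ = (∫⁻ ξ, Φ ξ t ∂μ) * Ce ^ (r - 1) := by
            rw [ENNReal.mul_rpow_of_nonneg _ _ hr0.le, ← ENNReal.rpow_mul, ← ENNReal.rpow_mul,
              one_div_mul_cancel hr0.ne', ENNReal.rpow_one]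
            congr 1
            rw [hq_eq]
            field_simp
  -- end of stepA
  have hwexp_nonneg : (0:ℝ) ≤ 4 - 4 / r := by
    have h : 4 / r ≤ 4 := by rw [div_le_iff₀ hr0]; nlinarith
    linarith
  have hΦ_meas : AEMeasurable (Function.uncurry fun t ξ => Φ ξ t)
      ((volume.restrict (Set.Ioi (0:ℝ))).prod μ) := by
    have h4p : Continuous fun z : ℝ × E => ‖z.2‖ ^ (4:ℝ) :=
      (continuous_norm.comp continuous_snd).rpow_const fun _ => Or.inr (by norm_num)
    have hwp : Continuous fun z : ℝ × E => w z.2 :=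
      (continuous_norm.comp continuous_snd).rpow_const fun _ => Or.inr hwexp_nonneg
    have hep : Continuous fun z : ℝ × E => Real.exp (-(Γ₂ * r) * z.1 * ‖z.2‖ ^ (4:ℝ)) :=
      Real.continuous_exp.comp (((continuous_const.mul continuous_fst).mul h4p))
    exact (((h4p.mul hwp).mul hep).measurable.ennreal_ofReal).aemeasurable
  have hpt : ∀ ξ : E, (∫⁻ t in Set.Ioi (0:ℝ), Φ ξ t)
      ≤ ENNReal.ofReal ((Γ₂ * r)⁻¹ * w ξ) := by
    intro ξ
    rcases eq_or_lt_of_le (norm_nonneg ξ) with hξ | hξ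
    · have : ∀ t : ℝ, Φ ξ t = 0 := by
        intro t
        simp only [hΦ_def]
        rw [← hξ, Real.zero_rpow (by norm_num : (4:ℝ) ≠ 0)]
        simp
      simp only [this, lintegral_zero]
      exact zero_le
    · have h4pos : (0:ℝ) < ‖ξ‖ ^ (4:ℝ) := Real.rpow_pos_of_pos hξ _
      have hb : 0 < Γ₂ * r * ‖ξ‖ ^ (4:ℝ) := by positivity
      have hstep : ∫⁻ t in Set.Ioi (0:ℝ), Φ ξ t
          = ENNReal.ofReal (‖ξ‖ ^ (4:ℝ) * w ξ) *
              ∫⁻ t in Set.Ioi (0:ℝ), ENNReal.ofReal (Real.exp (-((Γ₂ * r * ‖ξ‖ ^ (4:ℝ)) * t))) := by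
        rw [← lintegral_const_mul' _ _ ofReal_ne_top]
        refine lintegral_congr fun t => ?_
        simp only [hΦ_def]
        have harg : -(Γ₂ * r) * t * ‖ξ‖ ^ (4:ℝ) = -((Γ₂ * r * ‖ξ‖ ^ (4:ℝ)) * t) := by ring
        rw [harg, ENNReal.ofReal_mul (by positivity)]
      rw [hstep, lint_exp hb, ← ENNReal.ofReal_mul (by positivity)]
      apply le_of_eq
      congr 1
      field_simp
  have hCe_rm1_top : Ce ^ (r - 1) ≠ ∞ :=
    ENNReal.rpow_ne_top_of_nonneg (by linarith) hCe_top
  calc ∫⁻ t in Set.Ioi (0:ℝ),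
        (ENNReal.ofReal (∫ ξ, ‖ξ‖ ^ (4:ℝ) * Real.exp (-Γ₂ * t * ‖ξ‖ ^ (4:ℝ)) ∂μ)) ^ r
      ≤ ∫⁻ t in Set.Ioi (0:ℝ), (∫⁻ ξ, Φ ξ t ∂μ) * Ce ^ (r - 1) :=
        lintegral_mono_ae ((ae_restrict_iff' measurableSet_Ioi).2
          (Filter.Eventually.of_forall stepA))
    _ = (∫⁻ t in Set.Ioi (0:ℝ), ∫⁻ ξ, Φ ξ t ∂μ) * Ce ^ (r - 1) :=
        lintegral_mul_const' _ _ hCe_rm1_top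
    _ = (∫⁻ ξ, (∫⁻ t in Set.Ioi (0:ℝ), Φ ξ t) ∂μ) * Ce ^ (r - 1) := by
        rw [lintegral_lintegral_swap hΦ_meas]
    _ ≤ (∫⁻ ξ, ENNReal.ofReal ((Γ₂ * r)⁻¹ * w ξ) ∂μ) * Ce ^ (r - 1) :=
        mul_le_mul_left (lintegral_mono hpt) _
    _ = (ENNReal.ofReal (Γ₂ * r)⁻¹ * Ce) * Ce ^ (r - 1) := by
        congr 1
        rw [hCe_def, ← lintegral_const_mul' _ _ ofReal_ne_top]
        exact lintegral_congr fun ξ => by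
          rw [ENNReal.ofReal_mul (by positivity)]
    _ = ENNReal.ofReal (Γ₂ * r)⁻¹ * Ce ^ r := by
        rw [mul_assoc]
        congr 1
        nth_rewrite 1 [← ENNReal.rpow_one Ce]
        rw [← ENNReal.rpow_add_of_nonneg 1 (r - 1) zero_le_one (by linarith)]
        congr 1
        ring

/-- For the bi-Laplacian semigroup T(t) = exp(−Γ₂tΔ²) on FM(ℝⁿ)
(Fourier symbol e^{−Γ₂t|ξ|⁴}) and 1 ≤ p ≤ ∞ one has
‖Δ²T(·)u₀‖_{L^p(ℝ₊, FM)} ≤ (Γ₂ p)^{−1/p} ‖u₀‖_{FM^{4−4/p}}.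
On the Fourier side u₀ is represented by the finite variation measure μ = |û₀|;
then ‖Δ²T(t)u₀‖_FM = ∫ |ξ|⁴ e^{−Γ₂t|ξ|⁴} d|û₀|(ξ) and
‖u₀‖_{FM^{4−4/p}} = ∫ |ξ|^{4−4/p} d|û₀|(ξ).  (For p = ∞, ENNReal.toReal gives
p.toReal = 0 and 1/p.toReal = 0, recovering the constant 1 and the exponent 4.) -/
theorem stmt7 {n : ℕ} (Γ₂ : ℝ) (hΓ₂ : 0 < Γ₂) (p : ℝ≥0∞) (hp : 1 ≤ p)
    (μ : Measure (EuclideanSpace ℝ (Fin n))) [IsFiniteMeasure μ]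
    (hμ : Integrable (fun ξ : EuclideanSpace ℝ (Fin n) => ‖ξ‖ ^ (4 : ℝ)) μ) :
    eLpNorm
        (fun t : ℝ => ∫ ξ, ‖ξ‖ ^ (4 : ℝ) * Real.exp (-Γ₂ * t * ‖ξ‖ ^ (4 : ℝ)) ∂μ)
        p (volume.restrict (Set.Ioi (0 : ℝ)))
      ≤ ENNReal.ofReal
          ((Γ₂ * p.toReal) ^ (-(1 : ℝ) / p.toReal) *
            ∫ ξ, ‖ξ‖ ^ ((4 : ℝ) - 4 / p.toReal) ∂μ) := by
  rcases eq_or_ne p ⊤ with hptop | hptop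
  · subst hptop
    rw [eLpNorm_exponent_top]
    simp only [ENNReal.toReal_top, _root_.div_zero, neg_div, neg_zero, Real.rpow_zero, one_mul, sub_zero]
    norm_num
    simp only [← Real.rpow_natCast, Nat.cast_ofNat]
    refine eLpNormEssSup_le_of_ae_bound (C := ∫ ξ : EuclideanSpace ℝ (Fin n), ‖ξ‖ ^ (4:ℝ) ∂μ) ?_
    filter_upwards [ae_restrict_mem measurableSet_Ioi] with t ht
    have hF0 : 0 ≤ ∫ ξ : EuclideanSpace ℝ (Fin n), ‖ξ‖ ^ (4:ℝ) * Real.exp (-(Γ₂ * t * ‖ξ‖ ^ (4:ℝ))) ∂μ :=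
      integral_nonneg fun ξ =>
        mul_nonneg (Real.rpow_nonneg (norm_nonneg _) _) (Real.exp_pos _).le
    rw [Real.norm_eq_abs, abs_of_nonneg hF0]
    refine integral_mono_of_nonneg
      (Filter.Eventually.of_forall fun ξ =>
        mul_nonneg (Real.rpow_nonneg (norm_nonneg _) _) (Real.exp_pos _).le)
      hμ (Filter.Eventually.of_forall fun ξ => ?_)
    have hexp : Real.exp (-(Γ₂ * t * ‖ξ‖ ^ (4:ℝ))) ≤ 1 := by
      rw [Real.exp_le_one_iff, neg_nonpos]
      have ht0 : (0:ℝ) < t := Set.mem_Ioi.mp ht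
      exact mul_nonneg (mul_nonneg hΓ₂.le ht0.le) (Real.rpow_nonneg (norm_nonneg _) _)
    exact mul_le_of_le_one_right (Real.rpow_nonneg (norm_nonneg _) _) hexp
  · have hp0 : p ≠ 0 := (zero_lt_one.trans_le hp).ne'
    set r := p.toReal with hr_def
    have hr1 : 1 ≤ r := by
      have := ENNReal.toReal_mono hptop hp
      simpa using this
    have hr0 : (0:ℝ) < r := lt_of_lt_of_le one_pos hr1
    rw [eLpNorm_eq_lintegral_rpow_enorm_toReal hp0 hptop]
    have hcong : (∫⁻ t, (‖(∫ ξ : EuclideanSpace ℝ (Fin n), ‖ξ‖ ^ (4:ℝ) * Real.exp (-Γ₂ * t * ‖ξ‖ ^ (4:ℝ)) ∂μ)‖ₑ) ^ r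
          ∂(volume.restrict (Set.Ioi (0:ℝ))))
        = ∫⁻ t in Set.Ioi (0:ℝ),
            (ENNReal.ofReal (∫ ξ : EuclideanSpace ℝ (Fin n), ‖ξ‖ ^ (4:ℝ) * Real.exp (-Γ₂ * t * ‖ξ‖ ^ (4:ℝ)) ∂μ)) ^ r := by
      refine setLIntegral_congr_fun measurableSet_Ioi (fun t ht => ?_)
      have hF0 : 0 ≤ ∫ ξ, ‖ξ‖ ^ (4:ℝ) * Real.exp (-Γ₂ * t * ‖ξ‖ ^ (4:ℝ)) ∂μ :=
        integral_nonneg fun ξ =>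
          mul_nonneg (Real.rpow_nonneg (norm_nonneg _) _) (Real.exp_pos _).le
      rw [Real.enorm_eq_ofReal hF0]
    rw [hcong]
    have hmain := main_lint hΓ₂ hr1 μ hμ
    have hle := ENNReal.rpow_le_rpow hmain (by positivity : (0:ℝ) ≤ 1 / r)
    refine le_trans hle ?_
    have hw_int : Integrable (fun ξ : EuclideanSpace ℝ (Fin n) => ‖ξ‖ ^ ((4:ℝ) - 4 / r)) μ :=
      norm_rpow_integrable hμ
        (by have h : 4 / r ≤ 4 := by rw [div_le_iff₀ hr0]; nlinarith
            linarith)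
        (by have h : (0:ℝ) ≤ 4 / r := by positivity
            linarith)
    have hCe : (∫⁻ ξ, ENNReal.ofReal (‖ξ‖ ^ ((4:ℝ) - 4 / r)) ∂μ)
        = ENNReal.ofReal (∫ ξ, ‖ξ‖ ^ ((4:ℝ) - 4 / r) ∂μ) :=
      (ofReal_integral_eq_lintegral_ofReal hw_int
        (Filter.Eventually.of_forall fun ξ => Real.rpow_nonneg (norm_nonneg _) _)).symm
    rw [hCe, ENNReal.mul_rpow_of_nonneg _ _ (by positivity), ← ENNReal.rpow_mul,
      mul_one_div_cancel hr0.ne', ENNReal.rpow_one,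
      ENNReal.ofReal_rpow_of_nonneg (by positivity) (by positivity),
      ← ENNReal.ofReal_mul (by positivity)]
    apply le_of_eq
    congr 2
    rw [← Real.rpow_neg_one (Γ₂ * r), ← Real.rpow_mul (by positivity)]
    congr 1
    ring
end

section
/- For Γ₂ > 0 and f ∈ L¹(ℝ₊, FM(ℝⁿ)), the convolution (Δ²T ⋆ f)(t) := Δ² ∫₀ᵗ exp(−Γ₂(t−s)Δ²) f(s) ds satisfies ‖Δ²T ⋆ f‖_{L¹(ℝ₊, FM(ℝⁿ))} ≤ Γ₂^{-1} ‖f‖_{L¹(ℝ₊, FM(ℝⁿ))}; i.e., the bilaplacian operator Γ₂Δ² has L¹ maximal regularity on FM(ℝⁿ). -/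
open MeasureTheory Set Filter

private lemma ofReal_int_le {α : Type*} [MeasurableSpace α] (μ : Measure α) (f : α → ℝ)
    (hf : ∀ x, 0 ≤ f x) :
    ENNReal.ofReal (∫ x, f x ∂μ) ≤ ∫⁻ x, ENNReal.ofReal (f x) ∂μ := by
  by_cases hi : Integrable f μ
  · rw [ofReal_integral_eq_lintegral_ofReal hi (Filter.Eventually.of_forall hf)]
  · simp [integral_undef hi]

private lemma kernel_bound (Γ₂ : ℝ) (hΓ₂ : 0 < Γ₂) (c : ℝ) (hc : 0 ≤ c) (s : ℝ) :
    ∫⁻ t in Set.Ioi (0 : ℝ),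
      (if s ≤ t then ENNReal.ofReal (c * Real.exp (-Γ₂ * (t - s) * c)) else 0)
      ≤ ENNReal.ofReal Γ₂⁻¹ := by
  rcases hc.eq_or_lt with rfl | hc
  · simp
  have hbpos : 0 < Γ₂ * c := mul_pos hΓ₂ hc
  have hnn : ∀ t, 0 ≤ c * Real.exp (-Γ₂ * (t - s) * c) := fun t =>
    mul_nonneg hc.le (Real.exp_pos _).le
  have hint : IntegrableOn (fun t => c * Real.exp (-Γ₂ * (t - s) * c)) (Set.Ioi s) := by
    have heq : (fun t => c * Real.exp (-Γ₂ * (t - s) * c))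
        = fun t => (c * Real.exp (Γ₂ * c * s)) * Real.exp (-(Γ₂ * c) * t) := by
      funext t
      rw [mul_assoc c, ← Real.exp_add]
      congr 2
      ring
    rw [heq]
    exact (exp_neg_integrableOn_Ioi s hbpos).const_mul _
  have hintIci : IntegrableOn (fun t => c * Real.exp (-Γ₂ * (t - s) * c)) (Set.Ici s) :=
    Iff.mpr integrableOn_Ici_iff_integrableOn_Ioi hint
  have hval : ∫ t in Set.Ioi s, c * Real.exp (-Γ₂ * (t - s) * c) = Γ₂⁻¹ := by
    have hderiv : ∀ t ∈ Set.Ici s,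
        HasDerivAt (fun t => -Γ₂⁻¹ * Real.exp (-Γ₂ * (t - s) * c))
          (c * Real.exp (-Γ₂ * (t - s) * c)) t := by
      intro t _
      have h1 : HasDerivAt (fun t : ℝ => -Γ₂ * (t - s) * c) (-Γ₂ * c) t := by
        simpa using (((hasDerivAt_id t).sub_const s).const_mul (-Γ₂)).mul_const c
      have h2 := (h1.exp).const_mul (-Γ₂⁻¹)
      have he : c * Real.exp (-Γ₂ * (t - s) * c) = -Γ₂⁻¹ * (Real.exp (-Γ₂ * (t - s) * c) * (-Γ₂ * c)) := by
        linear_combination (-(c * Real.exp (-Γ₂ * (t - s) * c))) * (inv_mul_cancel₀ hΓ₂.ne')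
      rw [he]
      exact h2
    have htend : Tendsto (fun t => -Γ₂⁻¹ * Real.exp (-Γ₂ * (t - s) * c)) atTop (nhds 0) := by
      have h2 : Tendsto (fun t : ℝ => -Γ₂ * (t - s) * c) atTop atBot := by
        have h3 : Tendsto (fun t : ℝ => t - s) atTop atTop := tendsto_atTop_add_const_right atTop (-s) tendsto_id
        have h4 : Tendsto (fun t : ℝ => -Γ₂ * (t - s)) atTop atBot := by
          simpa using h3.const_mul_atTop_of_neg (neg_lt_zero.mpr hΓ₂)
        exact h4.atBot_mul_const hc
      have h5 := (Real.tendsto_exp_atBot.comp h2).const_mul (-Γ₂⁻¹)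
      simpa using h5
    have hv := integral_Ioi_of_hasDerivAt_of_tendsto' hderiv hint htend
    rw [hv]
    simp
  calc ∫⁻ t in Set.Ioi (0 : ℝ),
        (if s ≤ t then ENNReal.ofReal (c * Real.exp (-Γ₂ * (t - s) * c)) else 0)
      = ∫⁻ t in Set.Ioi (0 : ℝ),
          (Set.Ici s).indicator (fun t => ENNReal.ofReal (c * Real.exp (-Γ₂ * (t - s) * c))) t := by
        refine lintegral_congr fun t => ?_
        simp [Set.indicator_apply]
    _ = ∫⁻ t in Set.Ici s, ENNReal.ofReal (c * Real.exp (-Γ₂ * (t - s) * c))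
          ∂((volume : Measure ℝ).restrict (Set.Ioi 0)) := by
        rw [lintegral_indicator measurableSet_Ici]
    _ ≤ ∫⁻ t in Set.Ici s, ENNReal.ofReal (c * Real.exp (-Γ₂ * (t - s) * c)) := by
        rw [Measure.restrict_restrict measurableSet_Ici]
        exact lintegral_mono_set Set.inter_subset_left
    _ = ENNReal.ofReal (∫ t in Set.Ici s, c * Real.exp (-Γ₂ * (t - s) * c)) :=
        (ofReal_integral_eq_lintegral_ofReal hintIci (Filter.Eventually.of_forall hnn)).symm
    _ = ENNReal.ofReal Γ₂⁻¹ := by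
        rw [integral_Ici_eq_integral_Ioi, hval]

/-- L¹ maximal regularity of Γ₂Δ² on FM(ℝⁿ):
‖Δ²T ⋆ f‖_{L¹(ℝ₊,FM)} ≤ Γ₂^{-1} ‖f‖_{L¹(ℝ₊,FM)}.
On the Fourier side f(s) is represented by the density g(s,·) against a fixed finite
variation measure μ; then (Δ²T ⋆ f)(t) has Fourier density
ξ ↦ ∫₀ᵗ |ξ|⁴ e^{−Γ₂(t−s)|ξ|⁴} g(s,ξ) ds, and the FM-norms are the μ-integrals of the
pointwise norms. -/
theorem stmt8 {n : ℕ} (Γ₂ : ℝ) (hΓ₂ : 0 < Γ₂)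
    (μ : Measure (EuclideanSpace ℝ (Fin n))) [IsFiniteMeasure μ]
    (g : ℝ → EuclideanSpace ℝ (Fin n) → ℂ)
    (hg : Integrable (fun q : ℝ × EuclideanSpace ℝ (Fin n) => g q.1 q.2)
      (((volume : Measure ℝ).restrict (Set.Ioi 0)).prod μ)) :
    ∫ t in Set.Ioi (0 : ℝ),
        ∫ ξ, ‖∫ s in Set.Ioc (0 : ℝ) t,
            (‖ξ‖ ^ (4 : ℝ) * Real.exp (-Γ₂ * (t - s) * ‖ξ‖ ^ (4 : ℝ))) • g s ξ‖ ∂μ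
      ≤ Γ₂⁻¹ * ∫ t in Set.Ioi (0 : ℝ), ∫ ξ, ‖g t ξ‖ ∂μ := by
  classical
  set ν : Measure ℝ := (volume : Measure ℝ).restrict (Set.Ioi 0) with hνdef
  have hsm := hg.aestronglyMeasurable
  set G : ℝ × EuclideanSpace ℝ (Fin n) → ℂ := hsm.mk _ with hGdef
  have hGm : StronglyMeasurable G := hsm.stronglyMeasurable_mk
  have hae : (fun q : ℝ × EuclideanSpace ℝ (Fin n) => g q.1 q.2) =ᵐ[ν.prod μ] G := hsm.ae_eq_mk
  have hg₂ : Integrable G (ν.prod μ) := hg.congr hae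
  have h1 : ∀ᵐ t ∂ν, ∀ᵐ ξ ∂μ, g t ξ = G (t, ξ) := Measure.ae_ae_of_ae_prod hae
  have h2 : ∀ᵐ ξ ∂μ, ∀ᵐ t ∂ν, g t ξ = G (t, ξ) := by
    have hsw : ∀ᵐ p : (EuclideanSpace ℝ (Fin n)) × ℝ ∂(μ.prod ν), g p.2 p.1 = G (p.2, p.1) := by
      have hmp := (Measure.measurePreserving_swap (μ := μ) (ν := ν)).quasiMeasurePreserving
      exact hmp.tendsto_ae.eventually hae
    exact Measure.ae_ae_of_ae_prod hsw
  -- replace g by G in the goal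
  have hYG : (∫ t in Set.Ioi (0 : ℝ), ∫ ξ, ‖g t ξ‖ ∂μ)
      = ∫ t in Set.Ioi (0 : ℝ), ∫ ξ, ‖G (t, ξ)‖ ∂μ := by
    refine integral_congr_ae ?_
    filter_upwards [h1] with t ht
    exact integral_congr_ae (ht.mono fun ξ hξ => by simp only [hξ])
  have hXG : (∫ t in Set.Ioi (0 : ℝ),
        ∫ ξ, ‖∫ s in Set.Ioc (0 : ℝ) t,
            (‖ξ‖ ^ (4 : ℝ) * Real.exp (-Γ₂ * (t - s) * ‖ξ‖ ^ (4 : ℝ))) • g s ξ‖ ∂μ)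
      = ∫ t in Set.Ioi (0 : ℝ),
        ∫ ξ, ‖∫ s in Set.Ioc (0 : ℝ) t,
            (‖ξ‖ ^ (4 : ℝ) * Real.exp (-Γ₂ * (t - s) * ‖ξ‖ ^ (4 : ℝ))) • G (s, ξ)‖ ∂μ := by
    refine integral_congr_ae (Filter.Eventually.of_forall fun t => ?_)
    refine integral_congr_ae ?_
    filter_upwards [h2] with ξ hξ
    congr 1
    refine integral_congr_ae ?_
    have hle : (volume : Measure ℝ).restrict (Set.Ioc (0 : ℝ) t) ≤ ν :=
      Measure.restrict_mono Set.Ioc_subset_Ioi_self le_rfl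
    filter_upwards [hξ.filter_mono (ae_mono hle)] with s hs
    rw [hs]
  rw [hXG, hYG]
  -- now everything with the measurable representative G
  set R : ℝ := ∫ t in Set.Ioi (0 : ℝ), ∫ ξ, ‖G (t, ξ)‖ ∂μ with hRdef
  have hR0 : 0 ≤ R := integral_nonneg fun t => integral_nonneg fun ξ => norm_nonneg _
  have hNm : Measurable fun p : ℝ × EuclideanSpace ℝ (Fin n) => (‖G p‖₊ : ENNReal) :=
    hGm.measurable.nnnorm.coe_nnreal_ennreal
  have hRof : ENNReal.ofReal R = ∫⁻ p, (‖G p‖₊ : ENNReal) ∂(ν.prod μ) := by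
    have hint : Integrable (Function.uncurry fun t ξ => ‖G (t, ξ)‖) (ν.prod μ) := by
      exact hg₂.norm
    have h3 : R = ∫ z, ‖G (z.1, z.2)‖ ∂(ν.prod μ) := by
      rw [hRdef]; exact integral_integral hint
    rw [h3, ofReal_integral_eq_lintegral_ofReal
      (by exact hint) (Filter.Eventually.of_forall fun z => norm_nonneg _)]
    refine lintegral_congr fun z => ?_
    exact ofReal_norm _
  -- the function F
  set F : ℝ → ℝ → EuclideanSpace ℝ (Fin n) → ENNReal := fun t s ξ =>
    (if s ≤ t then ENNReal.ofReal (‖ξ‖ ^ (4 : ℝ) * Real.exp (-Γ₂ * (t - s) * ‖ξ‖ ^ (4 : ℝ)))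
      else 0) * (‖G (s, ξ)‖₊ : ENNReal) with hFdef
  have hc4 : Continuous fun ξ : EuclideanSpace ℝ (Fin n) => ‖ξ‖ ^ (4 : ℝ) :=
    continuous_norm.rpow_const fun _ => Or.inr (by norm_num)
  have h4c : Continuous fun p : ℝ × ℝ × EuclideanSpace ℝ (Fin n) => ‖p.2.2‖ ^ (4 : ℝ) :=
    hc4.comp (continuous_snd.comp continuous_snd)
  have hkc : Continuous fun p : ℝ × ℝ × EuclideanSpace ℝ (Fin n) =>
      ‖p.2.2‖ ^ (4 : ℝ) * Real.exp (-Γ₂ * (p.1 - p.2.1) * ‖p.2.2‖ ^ (4 : ℝ)) :=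
    h4c.mul (Real.continuous_exp.comp
      ((continuous_const.mul (continuous_fst.sub (continuous_fst.comp continuous_snd))).mul h4c))
  have hFm : Measurable fun p : ℝ × ℝ × EuclideanSpace ℝ (Fin n) => F p.1 p.2.1 p.2.2 := by
    refine Measurable.mul ?_ (hNm.comp measurable_snd)
    exact Measurable.ite (measurableSet_le (measurable_fst.comp measurable_snd) measurable_fst)
      (ENNReal.continuous_ofReal.comp hkc).measurable measurable_const
  have knn : ∀ (t s : ℝ) (ξ : EuclideanSpace ℝ (Fin n)),
      0 ≤ ‖ξ‖ ^ (4 : ℝ) * Real.exp (-Γ₂ * (t - s) * ‖ξ‖ ^ (4 : ℝ)) := fun t s ξ =>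
    mul_nonneg (Real.rpow_nonneg (norm_nonneg _) _) (Real.exp_pos _).le
  -- key inequality at the level of ℝ≥0∞
  have hkey : ENNReal.ofReal (∫ t in Set.Ioi (0 : ℝ),
        ∫ ξ, ‖∫ s in Set.Ioc (0 : ℝ) t,
            (‖ξ‖ ^ (4 : ℝ) * Real.exp (-Γ₂ * (t - s) * ‖ξ‖ ^ (4 : ℝ))) • G (s, ξ)‖ ∂μ)
      ≤ ENNReal.ofReal Γ₂⁻¹ * ∫⁻ p, (‖G p‖₊ : ENNReal) ∂(ν.prod μ) := by
    calc ENNReal.ofReal (∫ t in Set.Ioi (0 : ℝ),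
          ∫ ξ, ‖∫ s in Set.Ioc (0 : ℝ) t,
              (‖ξ‖ ^ (4 : ℝ) * Real.exp (-Γ₂ * (t - s) * ‖ξ‖ ^ (4 : ℝ))) • G (s, ξ)‖ ∂μ)
        ≤ ∫⁻ t, ENNReal.ofReal (∫ ξ, ‖∫ s in Set.Ioc (0 : ℝ) t,
              (‖ξ‖ ^ (4 : ℝ) * Real.exp (-Γ₂ * (t - s) * ‖ξ‖ ^ (4 : ℝ))) • G (s, ξ)‖ ∂μ) ∂ν :=
          ofReal_int_le _ _ (fun t => integral_nonneg fun ξ => norm_nonneg _)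
      _ ≤ ∫⁻ t, (∫⁻ ξ, ENNReal.ofReal ‖∫ s in Set.Ioc (0 : ℝ) t,
              (‖ξ‖ ^ (4 : ℝ) * Real.exp (-Γ₂ * (t - s) * ‖ξ‖ ^ (4 : ℝ))) • G (s, ξ)‖ ∂μ) ∂ν :=
          lintegral_mono fun t => ofReal_int_le _ _ (fun ξ => norm_nonneg _)
      _ ≤ ∫⁻ t, (∫⁻ ξ, (∫⁻ s in Set.Ioc (0 : ℝ) t,
            (‖(‖ξ‖ ^ (4 : ℝ) * Real.exp (-Γ₂ * (t - s) * ‖ξ‖ ^ (4 : ℝ))) • G (s, ξ)‖₊ : ENNReal)) ∂μ) ∂ν := by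
          refine lintegral_mono fun t => lintegral_mono fun ξ => ?_
          rw [ofReal_norm]
          exact enorm_integral_le_lintegral_enorm _
      _ = ∫⁻ t, (∫⁻ ξ, (∫⁻ s, F t s ξ ∂ν) ∂μ) ∂ν := by
          refine lintegral_congr fun t => lintegral_congr fun ξ => ?_
          have hind : ∀ s : ℝ, F t s ξ = (Set.Iic t).indicator
              (fun s => (‖(‖ξ‖ ^ (4 : ℝ) * Real.exp (-Γ₂ * (t - s) * ‖ξ‖ ^ (4 : ℝ))) •
                G (s, ξ)‖₊ : ENNReal)) s := by
            intro s
            by_cases hst : s ≤ t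
            · simp only [hFdef, if_pos hst, Set.indicator_apply, Set.mem_Iic, hst, if_true,
                nnnorm_smul, ENNReal.coe_mul]
              rw [← enorm_eq_nnnorm (‖ξ‖ ^ (4:ℝ) * Real.exp (-Γ₂ * (t - s) * ‖ξ‖ ^ (4:ℝ))), Real.enorm_eq_ofReal (knn t s ξ)]
            · simp [hFdef, hst, Set.indicator_apply]
          simp_rw [hind]
          rw [lintegral_indicator measurableSet_Iic, hνdef,
            Measure.restrict_restrict measurableSet_Iic, Set.Iic_inter_Ioi]
      _ = ∫⁻ t, (∫⁻ s, (∫⁻ ξ, F t s ξ ∂μ) ∂ν) ∂ν := by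
          refine lintegral_congr fun t => ?_
          refine lintegral_lintegral_swap ?_
          exact (hFm.comp ((measurable_const.prodMk
            (measurable_snd.prodMk measurable_fst)) :
            Measurable fun q : EuclideanSpace ℝ (Fin n) × ℝ => ((t, q.2, q.1) :
              ℝ × ℝ × EuclideanSpace ℝ (Fin n)))).aemeasurable
      _ = ∫⁻ s, (∫⁻ t, (∫⁻ ξ, F t s ξ ∂μ) ∂ν) ∂ν := by
          refine lintegral_lintegral_swap ?_
          refine Measurable.aemeasurable ?_
          refine Measurable.lintegral_prod_right (f := fun p : ℝ × ℝ => fun ξ => F p.1 p.2 ξ) ?_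
          exact hFm.comp ((measurable_fst.fst.prodMk (measurable_fst.snd.prodMk measurable_snd)) :
            Measurable fun q : (ℝ × ℝ) × EuclideanSpace ℝ (Fin n) =>
              ((q.1.1, q.1.2, q.2) : ℝ × ℝ × EuclideanSpace ℝ (Fin n)))
      _ = ∫⁻ s, (∫⁻ ξ, (∫⁻ t, F t s ξ ∂ν) ∂μ) ∂ν := by
          refine lintegral_congr fun s => ?_
          refine lintegral_lintegral_swap ?_
          exact (hFm.comp ((measurable_fst.prodMk
            (measurable_const.prodMk measurable_snd)) :
            Measurable fun q : ℝ × EuclideanSpace ℝ (Fin n) => ((q.1, s, q.2) :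
              ℝ × ℝ × EuclideanSpace ℝ (Fin n)))).aemeasurable
      _ ≤ ∫⁻ s, (∫⁻ ξ, ENNReal.ofReal Γ₂⁻¹ * (‖G (s, ξ)‖₊ : ENNReal) ∂μ) ∂ν := by
          refine lintegral_mono fun s => lintegral_mono fun ξ => ?_
          have hmul : (∫⁻ t, F t s ξ ∂ν)
              = (∫⁻ t, (if s ≤ t then ENNReal.ofReal
                  (‖ξ‖ ^ (4 : ℝ) * Real.exp (-Γ₂ * (t - s) * ‖ξ‖ ^ (4 : ℝ))) else 0) ∂ν)
                * (‖G (s, ξ)‖₊ : ENNReal) := by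
            rw [hFdef]
            exact lintegral_mul_const' _ _ ENNReal.coe_ne_top
          rw [hmul]
          exact mul_le_mul_left
            (kernel_bound Γ₂ hΓ₂ _ (Real.rpow_nonneg (norm_nonneg ξ) _) s) _
      _ = ENNReal.ofReal Γ₂⁻¹ * ∫⁻ s, (∫⁻ ξ, (‖G (s, ξ)‖₊ : ENNReal) ∂μ) ∂ν := by
          simp_rw [lintegral_const_mul' _ _ ENNReal.ofReal_ne_top]
      _ = ENNReal.ofReal Γ₂⁻¹ * ∫⁻ p, (‖G p‖₊ : ENNReal) ∂(ν.prod μ) := by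
          rw [lintegral_prod _ hNm.aemeasurable]
  rw [← hRdef] at *
  have hfinal := hkey
  rw [← hRof, ← ENNReal.ofReal_mul (by positivity : (0:ℝ) ≤ Γ₂⁻¹)] at hfinal
  exact (ENNReal.ofReal_le_ofReal_iff (mul_nonneg (by positivity) hR0)).mp hfinal
end

section
/- Let V ∈ ℝⁿ with |V| = √(−α/β) (α < 0 < β), Γ₂ > 0, Γ₀ < 0, λ₀ ∈ ℝ, and let σ_{A₀}(ξ) = Γ₂|ξ|⁴ + Γ₀|ξ|² + iλ₀(V·ξ) + 2β σ_P(ξ)VVᵀ, where σ_P(ξ) = I − ξξᵀ/|ξ|². Then there exist ξ ≠ 0 and a unit vector x, both orthogonal to V, such that Re(xᵀ σ_{A₀}(ξ) x) = Γ₂|ξ|⁴ + Γ₀|ξ|² < 0; in particular the symbol has an eigenvalue with negative real part, so the ordered polar state is linearly exponentially unstable. -/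
/-- There is a unit vector orthogonal to V when n ≥ 2. -/
lemma exists_unit_orth {n : ℕ} (hn : 2 ≤ n) (V : EuclideanSpace ℝ (Fin n)) :
    ∃ x : EuclideanSpace ℝ (Fin n), ‖x‖ = 1 ∧ (inner ℝ x V : ℝ) = 0 := by
  have hdim : Module.finrank ℝ (EuclideanSpace ℝ (Fin n)) = n := by simp
  have h1 : Module.finrank ℝ (ℝ ∙ V) ≤ 1 := finrank_span_le_card ({V} : Set _) |>.trans (by simp)
  have hsum := Submodule.finrank_add_finrank_orthogonal (K := ℝ ∙ V)
  have hpos : 0 < Module.finrank ℝ (ℝ ∙ V)ᗮ := by omega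
  haveI := Module.finrank_pos_iff.mp hpos
  obtain ⟨y, hy⟩ := exists_ne (0 : (ℝ ∙ V)ᗮ)
  have hy0 : (y : EuclideanSpace ℝ (Fin n)) ≠ 0 := by
    intro h; exact hy (Subtype.ext h)
  refine ⟨‖(y : EuclideanSpace ℝ (Fin n))‖⁻¹ • (y : EuclideanSpace ℝ (Fin n)), ?_, ?_⟩
  · simp [norm_smul, inv_mul_cancel₀ (norm_ne_zero_iff.mpr hy0)]
  · have := y.2 V (Submodule.mem_span_singleton_self V)
    rw [real_inner_smul_left]
    rw [real_inner_comm] at this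
    simp [this]

/-- Linear instability of the ordered polar state for Γ₀ < 0:
with |V| = √(−α/β) (α < 0 < β), Γ₂ > 0, Γ₀ < 0 and n ≥ 2, there exist ξ ≠ 0 and a
unit vector x, both orthogonal to V, such that the real part of the quadratic form
xᵀσ_{A₀}(ξ)x — namely Γ₂|ξ|⁴‖x‖² + Γ₀|ξ|²‖x‖² + 2β xᵀ(σ_P(ξ)VVᵀ)x, the imaginary
part ilam₀(V·ξ) vanishing since V·ξ = 0 — equals Γ₂|ξ|⁴ + Γ₀|ξ|² < 0.
Here σ_P(ξ)w = w − (⟨ξ,w⟩/|ξ|²)ξ, so xᵀ(σ_P(ξ)VVᵀ)x = ⟨V,x⟩⟨x, V − (⟨ξ,V⟩/|ξ|²)ξ⟩. -/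
theorem stmt13 {n : ℕ} (hn : 2 ≤ n) (α β Γ₀ Γ₂ lam₀ : ℝ)
    (hα : α < 0) (hβ : 0 < β) (hΓ₂ : 0 < Γ₂) (hΓ₀ : Γ₀ < 0)
    (V : EuclideanSpace ℝ (Fin n)) (hV : ‖V‖ = Real.sqrt (-α / β)) :
    ∃ ξ x : EuclideanSpace ℝ (Fin n), ξ ≠ 0 ∧ ‖x‖ = 1 ∧
      (inner ℝ ξ V : ℝ) = 0 ∧ (inner ℝ x V : ℝ) = 0 ∧
      lam₀ * (inner ℝ V ξ : ℝ) = 0 ∧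
      (Γ₂ * ‖ξ‖ ^ 4 + Γ₀ * ‖ξ‖ ^ 2) * ‖x‖ ^ 2 +
          2 * β * (inner ℝ V x : ℝ) *
            (inner ℝ x (V - (((inner ℝ ξ V : ℝ)) / ‖ξ‖ ^ 2) • ξ) : ℝ)
        = Γ₂ * ‖ξ‖ ^ 4 + Γ₀ * ‖ξ‖ ^ 2 ∧
      Γ₂ * ‖ξ‖ ^ 4 + Γ₀ * ‖ξ‖ ^ 2 < 0 := by
  obtain ⟨x, hx1, hxV⟩ := exists_unit_orth hn V
  set t : ℝ := Real.sqrt (-Γ₀ / Γ₂) / 2 with ht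
  have hq : 0 < -Γ₀ / Γ₂ := div_pos (by linarith) hΓ₂
  have ht0 : 0 < t := by positivity
  refine ⟨t • x, x, ?_, hx1, ?_, hxV, ?_, ?_, ?_⟩
  · intro h
    have : ‖t • x‖ = 0 := by rw [h, norm_zero]
    rw [norm_smul, hx1] at this
    simp at this
    exact ne_of_gt ht0 this
  · rw [real_inner_smul_left, hxV, mul_zero]
  · rw [real_inner_comm, real_inner_smul_left, hxV, mul_zero, mul_zero]
  · rw [real_inner_comm x V, hxV]
    ring_nf
    rw [hx1]; ring
  · have hnorm : ‖t • x‖ = t := by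
      rw [norm_smul, hx1, mul_one, Real.norm_eq_abs, abs_of_pos ht0]
    rw [hnorm]
    have ht2 : t ^ 2 < -Γ₀ / Γ₂ := by
      have : t ^ 2 = (-Γ₀ / Γ₂) / 4 := by
        rw [ht, div_pow, Real.sq_sqrt hq.le]; norm_num
      rw [this]; linarith
    have h4 : t ^ 4 = t ^ 2 * t ^ 2 := by ring
    have : Γ₂ * t ^ 2 < -Γ₀ := by
      rw [lt_div_iff₀ hΓ₂] at ht2; linarith [ht2]
    calc Γ₂ * t ^ 4 + Γ₀ * t ^ 2 = (Γ₂ * t ^ 2 + Γ₀) * t ^ 2 := by ring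
      _ < 0 := mul_neg_of_neg_of_pos (by linarith) (by positivity)
end

section
/- Let Γ₂ > 0, Γ₀, λ₀ ∈ ℝ, V ∈ ℝⁿ, M ∈ ℝ^{n×n} symmetric, and σ_{A_LF}(ξ) = Γ₂|ξ|⁴ + Γ₀|ξ|² + σ_P(ξ)M + iλ₀ V·ξ. Then there exist ω > 0, φ₀ ∈ (0, π/2) and δ > 0 such that for all ξ ∈ ℝⁿ∖{0}, every eigenvalue λ of ω + σ_{A_LF}(ξ) satisfies |arg λ| ≤ φ₀ and |λ| ≥ δ (i.e. the shifted symbol takes values in a closed sector of angle less than π/2, bounded away from 0). -/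
open Matrix

/-- The Helmholtz projection symbol σ_P(ξ) = I − ξξᵀ/|ξ|² as a complex n×n matrix. -/
noncomputable def sigmaP {n : ℕ} (ξ : EuclideanSpace ℝ (Fin n)) :
    Matrix (Fin n) (Fin n) ℂ :=
  Matrix.of fun i j => (((if i = j then 1 else 0) - ξ i * ξ j / ‖ξ‖ ^ 2 : ℝ) : ℂ)

/-- Sectoriality of the shifted symbol
σ_{A_LF}(ξ) = Γ₂|ξ|⁴ + Γ₀|ξ|² + σ_P(ξ)M + iλ₀V·ξ (Γ₂ > 0, M symmetric):
there are ω > 0, φ₀ ∈ (0, π/2) and δ > 0 such that for every ξ ≠ 0 each eigenvalue λ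
of ω + σ_{A_LF}(ξ) satisfies |arg λ| ≤ φ₀ and |λ| ≥ δ, i.e. the shifted symbol takes
its spectrum in a closed subsector of angle < π/2, bounded away from 0. -/
theorem stmt16 {n : ℕ} (Γ₂ Γ₀ lam₀ : ℝ) (hΓ₂ : 0 < Γ₂)
    (V : EuclideanSpace ℝ (Fin n))
    (M : Matrix (Fin n) (Fin n) ℝ) (hM : M.IsSymm) :
    ∃ ω > (0 : ℝ), ∃ φ₀ ∈ Set.Ioo (0 : ℝ) (Real.pi / 2), ∃ δ > (0 : ℝ),
      ∀ ξ : EuclideanSpace ℝ (Fin n), ξ ≠ 0 →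
        ∀ (lam : ℂ) (v : Fin n → ℂ), v ≠ 0 →
          Matrix.mulVec
              ((((ω : ℂ) + ((Γ₂ * ‖ξ‖ ^ 4 + Γ₀ * ‖ξ‖ ^ 2 : ℝ) : ℂ) +
                  Complex.I * ((lam₀ * (inner ℝ V ξ : ℝ) : ℝ) : ℂ)) •
                  (1 : Matrix (Fin n) (Fin n) ℂ)) +
                sigmaP ξ * M.map (fun a => (a : ℂ))) v = lam • v →
          δ ≤ ‖lam‖ ∧ |lam.arg| ≤ φ₀ := by
  classical
  set S : ℝ := ∑ k, ∑ j, |M k j| with hS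
  have hS0 : 0 ≤ S :=
    Finset.sum_nonneg fun _ _ => Finset.sum_nonneg fun _ _ => abs_nonneg _
  set C : ℝ := |lam₀| * ‖V‖ + 2 * S + 1 with hCdef
  have hC0 : 0 < C := by positivity
  set ω : ℝ := 2 * S + 2 + (Γ₀ ^ 2 + 1) / Γ₂ + Γ₂ with hωdef
  have hω0 : 0 < ω := by positivity
  refine ⟨ω, hω0, Real.arctan C,
    ⟨Real.arctan_zero ▸ Real.arctan_strictMono hC0, Real.arctan_lt_pi_div_two C⟩, 1, one_pos, ?_⟩
  intro ξ hξ lam v hv h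
  set t : ℝ := ‖ξ‖ with htdef
  have ht0 : 0 < t := norm_pos_iff.2 hξ
  set c : ℂ := (ω : ℂ) + ((Γ₂ * t ^ 4 + Γ₀ * t ^ 2 : ℝ) : ℂ) +
      Complex.I * ((lam₀ * (inner ℝ V ξ : ℝ) : ℝ) : ℂ) with hc
  set A : Matrix (Fin n) (Fin n) ℂ := sigmaP ξ * M.map (fun a => (a : ℂ)) with hA
  -- eigenvector equation for A
  have hAv : A.mulVec v = (lam - c) • v := by
    have h' := h
    rw [Matrix.add_mulVec, Matrix.smul_mulVec, Matrix.one_mulVec] at h'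
    have : A.mulVec v = lam • v - c • v := by
      rw [← h']; abel
    rw [this, sub_smul]
  -- coordinate bound
  have hcoord : ∀ i, |ξ i| ≤ t := by
    intro i
    have hsum : t ^ 2 = ∑ j, ξ j ^ 2 := by
      rw [htdef, EuclideanSpace.norm_eq, Real.sq_sqrt (by positivity)]
      simp [sq_abs]
    have h1 : ξ i ^ 2 ≤ t ^ 2 := by
      rw [hsum]
      exact Finset.single_le_sum (fun j _ => sq_nonneg (ξ j)) (Finset.mem_univ i)
    calc |ξ i| = Real.sqrt (ξ i ^ 2) := (Real.sqrt_sq_eq_abs _).symm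
      _ ≤ Real.sqrt (t ^ 2) := Real.sqrt_le_sqrt h1
      _ = t := Real.sqrt_sq ht0.le
  have hEntry : ∀ i k, ‖(sigmaP ξ) i k‖ ≤ 2 := by
    intro i k
    have : (sigmaP ξ) i k =
        (((if i = k then 1 else 0) - ξ i * ξ k / t ^ 2 : ℝ) : ℂ) := rfl
    rw [this, Complex.norm_real, Real.norm_eq_abs]
    have hquot : |ξ i * ξ k / t ^ 2| ≤ 1 := by
      rw [abs_div, abs_mul, abs_of_pos (show (0:ℝ) < t ^ 2 by positivity),
        div_le_one (by positivity)]
      calc |ξ i| * |ξ k| ≤ t * t :=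
            mul_le_mul (hcoord i) (hcoord k) (abs_nonneg _) ht0.le
        _ = t ^ 2 := (sq t).symm
    have hif : |(if i = k then (1:ℝ) else 0)| ≤ 1 := by
      split <;> norm_num
    calc |(if i = k then (1:ℝ) else 0) - ξ i * ξ k / t ^ 2|
        ≤ |(if i = k then (1:ℝ) else 0)| + |ξ i * ξ k / t ^ 2| := abs_sub _ _
      _ ≤ 1 + 1 := add_le_add hif hquot
      _ = 2 := by norm_num
  -- pick maximizing coordinate
  obtain ⟨i₁, hi₁⟩ := Function.ne_iff.1 hv
  obtain ⟨i, -, hmax⟩ := Finset.exists_max_image Finset.univ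
    (fun j => ‖v j‖) ⟨i₁, Finset.mem_univ i₁⟩
  have hvi : 0 < ‖v i‖ :=
    lt_of_lt_of_le (by simpa [norm_pos_iff] using hi₁)
      (hmax i₁ (Finset.mem_univ i₁))
  -- bound the eigenvalue shift
  have heig : ‖lam - c‖ ≤ 2 * S := by
    have h1 : (lam - c) * v i = ∑ j, A i j * v j := by
      have := congrFun hAv i
      simpa [Matrix.mulVec, dotProduct, Pi.smul_apply, smul_eq_mul]
        using this.symm
    have h2 : ‖lam - c‖ * ‖v i‖
        ≤ (2 * S) * ‖v i‖ := by
      rw [← norm_mul, h1]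
      calc ‖∑ j, A i j * v j‖
          ≤ ∑ j, ‖A i j * v j‖ := by
            simpa using norm_sum_le Finset.univ (fun j => A i j * v j)
        _ ≤ ∑ j, (∑ k, 2 * |M k j|) * ‖v i‖ := by
            refine Finset.sum_le_sum fun j _ => ?_
            rw [norm_mul]
            refine mul_le_mul ?_ (hmax j (Finset.mem_univ j))
              (norm_nonneg _)
              (Finset.sum_nonneg fun k _ => by positivity)
            have : A i j = ∑ k, (sigmaP ξ) i k * ((M k j : ℝ) : ℂ) := by
              simp [hA, Matrix.mul_apply, Matrix.map_apply]
            rw [this]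
            calc ‖∑ k, (sigmaP ξ) i k * ((M k j : ℝ) : ℂ)‖
                ≤ ∑ k, ‖(sigmaP ξ) i k * ((M k j : ℝ) : ℂ)‖ := by
                  simpa using norm_sum_le Finset.univ
                    (fun k => (sigmaP ξ) i k * ((M k j : ℝ) : ℂ))
              _ ≤ ∑ k, 2 * |M k j| := by
                  refine Finset.sum_le_sum fun k _ => ?_
                  rw [norm_mul, Complex.norm_real, Real.norm_eq_abs]
                  exact mul_le_mul_of_nonneg_right (hEntry i k) (abs_nonneg _)
        _ = (∑ j, ∑ k, 2 * |M k j|) * ‖v i‖ := by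
            rw [← Finset.sum_mul]
        _ = (2 * S) * ‖v i‖ := by
            simp only [← Finset.mul_sum]
            rw [Finset.sum_comm, ← hS]
    exact le_of_mul_le_mul_right h2 hvi
  have hcre : c.re = ω + (Γ₂ * t ^ 4 + Γ₀ * t ^ 2) := by
    simp [hc, ← Complex.ofReal_pow]
  have hcim : c.im = lam₀ * (inner ℝ V ξ : ℝ) := by
    simp [hc, ← Complex.ofReal_pow]
  have hinner : |(inner ℝ V ξ : ℝ)| ≤ ‖V‖ * t := abs_real_inner_le_norm V ξ
  have hre1 : |lam.re - c.re| ≤ 2 * S := by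
    have := Complex.abs_re_le_norm (lam - c)
    rw [Complex.sub_re] at this
    linarith
  have him1 : |lam.im - c.im| ≤ 2 * S := by
    have := Complex.abs_im_le_norm (lam - c)
    rw [Complex.sub_im] at this
    linarith
  clear h hAv hEntry hcoord hmax hi₁ hvi heig hc hA
  clear A
  clear_value S C ω t c
  -- key polynomial inequality
  have hkey : 1 + t ≤ ω + (Γ₂ * t ^ 4 + Γ₀ * t ^ 2) - 2 * S := by
    have hu : (Γ₀ ^ 2 + 1) / Γ₂ * Γ₂ = Γ₀ ^ 2 + 1 :=
      div_mul_cancel₀ _ hΓ₂.ne'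
    rw [hωdef]
    nlinarith [sq_nonneg (Γ₂ * t ^ 2 + Γ₀), sq_nonneg (Γ₂ * t - 1),
      sq_nonneg (Γ₂ * t ^ 2 - Γ₂), sq_nonneg (Γ₂ * t ^ 2 - 1), hΓ₂, ht0.le,
      sq_nonneg t, mul_pos hΓ₂ hΓ₂, div_nonneg (by positivity : (0:ℝ) ≤ Γ₀ ^ 2 + 1) hΓ₂.le]
  have hRe : 1 + t ≤ lam.re := by
    have h1 := (abs_le.1 hre1).1
    rw [hcre] at h1
    linarith
  have hRe0 : 0 < lam.re := by linarith
  -- imaginary part bound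
  have hIm : |lam.im| ≤ C * lam.re := by
    have h2 : |c.im| ≤ |lam₀| * ‖V‖ * t := by
      rw [hcim, abs_mul, mul_assoc]
      exact mul_le_mul_of_nonneg_left hinner (abs_nonneg _)
    have h3 : |lam.im| ≤ |c.im| + 2 * S := by
      have := abs_sub_abs_le_abs_sub lam.im c.im
      linarith [him1]
    have h4 : |lam₀| * ‖V‖ * t + 2 * S ≤ C * (1 + t) := by
      rw [hCdef]
      nlinarith [ht0.le, hS0, abs_nonneg lam₀, norm_nonneg V,
        mul_nonneg (mul_nonneg (abs_nonneg lam₀) (norm_nonneg V)) ht0.le]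
    calc |lam.im| ≤ |lam₀| * ‖V‖ * t + 2 * S := by linarith
      _ ≤ C * (1 + t) := h4
      _ ≤ C * lam.re := mul_le_mul_of_nonneg_left hRe hC0.le
  constructor
  · calc (1:ℝ) ≤ 1 + t := by linarith
      _ ≤ lam.re := hRe
      _ ≤ ‖lam‖ := Complex.re_le_norm lam
  · -- argument bound
    have harg : lam.arg = Real.arctan (lam.im / lam.re) := by
      have hmem : lam.arg ∈ Set.Ioo (-(Real.pi / 2)) (Real.pi / 2) := by
        have := Complex.abs_arg_lt_pi_div_two_iff.2 (Or.inl hRe0)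
        constructor <;> [linarith [abs_lt.1 this]; exact (abs_lt.1 this).2]
      rw [← Complex.tan_arg lam, Real.arctan_tan hmem.1 hmem.2]
    rw [harg]
    have hratio : |lam.im / lam.re| ≤ C := by
      rw [abs_div, abs_of_pos hRe0, div_le_iff₀ hRe0]
      exact hIm
    rw [abs_le]
    constructor
    · rw [← Real.arctan_neg]
      exact Real.arctan_strictMono.monotone (by linarith [abs_le.1 hratio])
    · exact Real.arctan_strictMono.monotone (abs_le.1 hratio).2
end
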